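/- Suppose (λ*, y*) is an eigenpair with ‖y*‖₂ = 1. Then the Fréchet derivative of the Rayleigh quotient p at y* is the linear functional x ↦ y*ᵀ(J(y*) − λ*I)x, i.e. p'(y*) = y*ᵀ(J(y*) − λ*I) as a row vector. -/

import Mathlib

open Matrix Asymptotics Topology
open scoped RealInnerProductSpace

noncomputable def mvCLM {ι : Type*} [Fintype ι] [DecidableEq ι] (M : Matrix ι ι ℝ) :
    EuclideanSpace ℝ ι →L[ℝ] EuclideanSpace ℝ ι :=
  LinearMap.toContinuousLinearMap (Matrix.toEuclideanLin M)

noncomputable def invitPsi {n : ℕ} (J : EuclideanSpace ℝ (Fin n) → Matrix (Fin n) (Fin n) ℝ)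
    (σ : ℝ) (v : EuclideanSpace ℝ (Fin n)) : EuclideanSpace ℝ (Fin n) :=
  mvCLM ((J v - σ • 1)⁻¹) v

noncomputable def invitPhi {n : ℕ} (J : EuclideanSpace ℝ (Fin n) → Matrix (Fin n) (Fin n) ℝ)
    (σ : ℝ) (v : EuclideanSpace ℝ (Fin n)) : EuclideanSpace ℝ (Fin n) :=
  ‖invitPsi J σ v‖⁻¹ • invitPsi J σ v

noncomputable def rayQuot {n : ℕ} (A : EuclideanSpace ℝ (Fin n) → Matrix (Fin n) (Fin n) ℝ)
    (v : EuclideanSpace ℝ (Fin n)) : ℝ :=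
  ⟪v, mvCLM (A v) v⟫ / ⟪v, v⟫

lemma mvCLM_sub_smul_one {n : ℕ} (M : Matrix (Fin n) (Fin n) ℝ) (lam : ℝ)
    (x : EuclideanSpace ℝ (Fin n)) :
    mvCLM (M - lam • 1) x = mvCLM M x - lam • x := by
  simp only [mvCLM, LinearMap.coe_toContinuousLinearMap', map_sub, _root_.map_smul,
    LinearMap.sub_apply, LinearMap.smul_apply]
  congr 1
  apply PiLp.ext; intro i
  simp [Matrix.toEuclideanLin_apply, Matrix.one_mulVec]

/-- If `(λ*, y*)` is an eigenpair with `‖y*‖ = 1`, the Fréchet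
derivative of the Rayleigh quotient `p` at `y*` is the functional `x ↦ y*ᵀ(J(y*) − λ*I)x`. -/
theorem stmt12 {n : ℕ} (hn : 1 ≤ n)
    (A J : EuclideanSpace ℝ (Fin n) → Matrix (Fin n) (Fin n) ℝ)
    (hsymm : ∀ v : EuclideanSpace ℝ (Fin n), v ≠ 0 → (A v).IsSymm)
    (hsmooth : ContDiffOn ℝ 1 (fun w i j => A w i j) {(0 : EuclideanSpace ℝ (Fin n))}ᶜ)
    (hscale : ∀ α : ℝ, α ≠ 0 → ∀ v : EuclideanSpace ℝ (Fin n), v ≠ 0 → A (α • v) = A v)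
    (hJ : ∀ v : EuclideanSpace ℝ (Fin n), v ≠ 0 →
      HasFDerivAt (fun w => mvCLM (A w) w) (mvCLM (J v)) v)
    (lam : ℝ) (ystar : EuclideanSpace ℝ (Fin n)) (hnorm : ‖ystar‖ = 1)
    (heig : mvCLM (A ystar) ystar = lam • ystar) :
    HasFDerivAt (rayQuot A)
      ((innerSL ℝ ystar).comp (mvCLM (J ystar - lam • 1))) ystar := by
  have hy0 : ystar ≠ 0 := by
    intro h; rw [h, norm_zero] at hnorm; norm_num at hnorm
  have hf := hJ ystar hy0
  have hid := hasFDerivAt_id (𝕜 := ℝ) ystar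
  have hN : HasFDerivAt (fun v : EuclideanSpace ℝ (Fin n) => (⟪v, mvCLM (A v) v⟫ : ℝ))
      ((fderivInnerCLM ℝ (ystar, mvCLM (A ystar) ystar)).comp
        ((ContinuousLinearMap.id ℝ _).prod (mvCLM (J ystar)))) ystar := by
    simpa using hid.inner ℝ hf
  have hD : HasFDerivAt (fun v : EuclideanSpace ℝ (Fin n) => (⟪v, v⟫ : ℝ))
      ((fderivInnerCLM ℝ (ystar, ystar)).comp
        ((ContinuousLinearMap.id ℝ _).prod (ContinuousLinearMap.id ℝ _))) ystar := by
    simpa using hid.inner ℝ hid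
  have hDy : ⟪ystar, ystar⟫ = (1 : ℝ) := by
    rw [real_inner_self_eq_norm_sq, hnorm]; norm_num
  have hinv : HasFDerivAt (fun v : EuclideanSpace ℝ (Fin n) => (⟪v, v⟫ : ℝ)⁻¹)
      ((-(⟪ystar, ystar⟫ ^ 2)⁻¹) • ((fderivInnerCLM ℝ (ystar, ystar)).comp
        ((ContinuousLinearMap.id ℝ _).prod (ContinuousLinearMap.id ℝ _)))) ystar :=
    (hasDerivAt_inv (by rw [hDy]; norm_num)).comp_hasFDerivAt ystar hD
  have hmul := hN.mul hinv
  have hfun : rayQuot A = fun v => (⟪v, mvCLM (A v) v⟫ : ℝ) * (⟪v, v⟫)⁻¹ := by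
    funext v; simp only [rayQuot, div_eq_mul_inv]
  rw [hfun]
  refine hmul.congr_fderiv ?_; symm
  ext x
  simp only [ContinuousLinearMap.comp_apply, ContinuousLinearMap.add_apply,
    ContinuousLinearMap.smul_apply, ContinuousLinearMap.prod_apply,
    ContinuousLinearMap.coe_id', id_eq, fderivInnerCLM_apply, innerSL_apply_apply,
    heig, hDy, mvCLM_sub_smul_one]
  rw [inner_sub_right, real_inner_smul_right]
  simp only [hDy, real_inner_smul_right, smul_eq_mul, real_inner_comm x ystar]
  ring
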